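/- arXiv:1606.07711 — 2 statements merged into one kernel-verified Lean document; each statement's English description precedes it below -/
import Mathlib

section
/- Let A be a real n×n payoff matrix of a symmetric two-player game and let Δ = {x ∈ ℝⁿ : Σ_h x_h = 1, x_h ≥ 0 for all h} be the standard simplex of mixed strategies. Suppose x : [0,∞) → ℝⁿ is a trajectory of the replicator dynamics, i.e. for every t ≥ 0 and every h, the h-th coordinate satisfies x_h'(t) = x_h(t)·((A x(t))_h − x(t)ᵀ A x(t)), with x(t) ∈ Δ for all t and x(0) in the interior of Δ (all coordinates of x(0) strictly positive). If x(t) converges to a point x* as t → ∞, then x* is a (symmetric) Nash equilibrium, i.e. yᵀ A x* ≤ x*ᵀ A x* for every y ∈ Δ. -/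
open Matrix

/-- If a trajectory of the replicator dynamics, staying in the standard simplex
and starting in its interior, converges as `t → ∞`, then the limit is a
(symmetric) Nash equilibrium. -/
theorem replicator_limit_is_nash
    {n : ℕ} (A : Matrix (Fin n) (Fin n) ℝ)
    (x : ℝ → Fin n → ℝ) (xstar : Fin n → ℝ)
    (hODE : ∀ t ≥ (0 : ℝ), ∀ h : Fin n,
      HasDerivAt (fun s => x s h)
        (x t h * ((A.mulVec (x t)) h - (x t) ⬝ᵥ A.mulVec (x t))) t)
    (hsimplex : ∀ t ≥ (0 : ℝ), x t ∈ stdSimplex ℝ (Fin n))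
    (hinterior : ∀ h : Fin n, 0 < x 0 h)
    (hlim : Filter.Tendsto x Filter.atTop (nhds xstar)) :
    ∀ y ∈ stdSimplex ℝ (Fin n),
      y ⬝ᵥ A.mulVec xstar ≤ xstar ⬝ᵥ A.mulVec xstar := by
  -- set c := average payoff of xstar
  set c : ℝ := xstar ⬝ᵥ A.mulVec xstar with hc
  -- it suffices to prove the inequality for pure strategies
  suffices hpure : ∀ h : Fin n, (A.mulVec xstar) h ≤ c by
    intro y hy
    have hsum : ∑ i, y i = 1 := hy.2
    calc y ⬝ᵥ A.mulVec xstar = ∑ i, y i * (A.mulVec xstar) i := rfl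
      _ ≤ ∑ i, y i * c := by
          apply Finset.sum_le_sum
          intro i _
          exact mul_le_mul_of_nonneg_left (hpure i) (hy.1 i)
      _ = c := by rw [← Finset.sum_mul, hsum, one_mul]
  intro h
  by_contra hcon
  push_neg at hcon
  set ε : ℝ := (A.mulVec xstar) h - c with hε
  have hεpos : 0 < ε := by simp [hε]; linarith
  -- the "growth rate" function
  set G : (Fin n → ℝ) → ℝ := fun v => (A.mulVec v) h - v ⬝ᵥ A.mulVec v with hGdef
  have hGcont : Continuous G := by
    have h1 : Continuous fun v : Fin n → ℝ => (A.mulVec v) h := by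
      simp only [mulVec, dotProduct]
      exact continuous_finset_sum _ fun i _ =>
        (continuous_const.mul (continuous_apply i))
    have h2 : Continuous fun v : Fin n → ℝ => v ⬝ᵥ A.mulVec v := by
      simp only [dotProduct, mulVec]
      exact continuous_finset_sum _ fun i _ =>
        (continuous_apply i).mul (continuous_finset_sum _ fun j _ =>
          (continuous_const.mul (continuous_apply j)))
    exact h1.sub h2
  -- continuity of the trajectory on [0,∞)
  have hxcont : ∀ t ≥ (0:ℝ), ContinuousAt x t := by
    intro t ht
    exact continuousAt_pi.2 fun i => (hODE t ht i).continuousAt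
  -- clamped trajectory, continuous on all of ℝ
  set xc : ℝ → Fin n → ℝ := fun t => x (max t 0) with hxc
  have hxccont : Continuous xc := by
    rw [continuous_iff_continuousAt]
    intro t
    rcases lt_or_ge t 0 with ht | ht
    · have hev : (fun _ : ℝ => x 0) =ᶠ[nhds t] xc := by
        filter_upwards [Iio_mem_nhds ht] with s hs
        have hs' : s < 0 := hs
        have hm0 : s ⊔ 0 = 0 := sup_eq_right.2 hs'.le
        simp [hxc, hm0]
      exact continuousAt_const.congr hev
    · have hx' : ContinuousAt x (max t 0) := hxcont _ (le_max_right t 0)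
      have hm : ContinuousAt (fun s : ℝ => max s 0) t :=
        (continuous_id.max continuous_const).continuousAt
      exact ContinuousAt.comp (g := x) (f := fun s : ℝ => max s 0) (x := t) hx' hm
  set gt : ℝ → ℝ := fun t => G (xc t) with hgt
  have hgtcont : Continuous gt := hGcont.comp hxccont
  have hgteq : ∀ t ≥ (0:ℝ), gt t = G (x t) := by
    intro t ht; simp [hgt, hxc, max_eq_left ht]
  -- the exponential integrating factor
  set E : ℝ → ℝ := fun t => Real.exp (-∫ s in (0:ℝ)..t, gt s) with hE
  have hEpos : ∀ t, 0 < E t := fun t => Real.exp_pos _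
  have hIderiv : ∀ t : ℝ, HasDerivAt (fun u => ∫ s in (0:ℝ)..u, gt s) (gt t) t :=
    fun t => (hgtcont.integral_hasStrictDerivAt 0 t).hasDerivAt
  have hEderiv : ∀ t : ℝ, HasDerivAt E (E t * (-gt t)) t := by
    intro t
    exact ((hIderiv t).neg).exp
  -- the key conservation law: x t h * E t = x 0 h for t ≥ 0
  have hkey : ∀ t ≥ (0:ℝ), x t h * E t = x 0 h := by
    intro b hb
    have hder : ∀ t ∈ Set.Ico (0:ℝ) b,
        HasDerivWithinAt (fun s => x s h * E s) 0 (Set.Ici t) t := by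
      intro t ht
      have h1 := hODE t ht.1 h
      have h2 := hEderiv t
      have := h1.mul h2
      have heq : x t h * (G (x t)) * E t + x t h * (E t * (-gt t)) = 0 := by
        rw [hgteq t ht.1]; ring
      simp only [hGdef] at heq
      rw [heq] at this
      exact this.hasDerivWithinAt
    have hcont : ContinuousOn (fun s => x s h * E s) (Set.Icc 0 b) := by
      intro t ht
      exact (((hODE t ht.1 h).continuousAt).mul (hEderiv t).continuousAt).continuousWithinAt
    have := constant_of_has_deriv_right_zero hcont hder b (Set.right_mem_Icc.2 hb)
    simpa [hE, intervalIntegral.integral_same] using this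
  have hxpos : ∀ t ≥ (0:ℝ), 0 < x t h := by
    intro t ht
    have := hkey t ht
    nlinarith [hEpos t, hinterior h]
  -- eventually the growth rate is at least ε/2
  have hGlim : Filter.Tendsto (fun t => G (x t)) Filter.atTop (nhds ε) := by
    have := (hGcont.tendsto xstar).comp hlim
    have hGx : G xstar = ε := by simp [hGdef, hε, hc]
    rwa [hGx] at this
  have hev : ∀ᶠ t in Filter.atTop, ε / 2 ≤ G (x t) :=
    hGlim.eventually (eventually_ge_nhds (by linarith))
  obtain ⟨T', hT'⟩ := Filter.eventually_atTop.1 hev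
  set T : ℝ := max T' 0 with hT
  have hT0 : (0:ℝ) ≤ T := le_max_right _ _
  have hrate : ∀ s ≥ T, ε / 2 ≤ gt s := by
    intro s hs
    have hs0 : (0:ℝ) ≤ s := le_trans hT0 hs
    rw [hgteq s hs0]
    exact hT' s (le_trans (le_max_left _ _) hs)
  -- exponential growth formula for t ≥ T
  have hgrow : ∀ t ≥ T, x t h = x T h * Real.exp (∫ s in T..t, gt s) := by
    intro t ht
    have ht0 : (0:ℝ) ≤ t := le_trans hT0 ht
    have h1 := hkey t ht0
    have h2 := hkey T hT0
    have hsub : (∫ s in (0:ℝ)..t, gt s) - (∫ s in (0:ℝ)..T, gt s)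
        = ∫ s in T..t, gt s := by
      rw [intervalIntegral.integral_interval_sub_left
        (hgtcont.intervalIntegrable 0 t) (hgtcont.intervalIntegrable 0 T)]
    have hETpos := hEpos T
    have hEtpos := hEpos t
    have : x t h = x 0 h / E t := by field_simp at h1 ⊢; linarith
    rw [this, ← h2, hE]
    simp only
    rw [mul_div_assoc, ← Real.exp_sub]
    congr 1
    congr 1
    linarith [hsub]
  -- lower bound on the integral
  have hintbound : ∀ t ≥ T, (t - T) * (ε / 2) ≤ ∫ s in T..t, gt s := by
    intro t ht
    have : ∫ s in T..t, (ε/2 : ℝ) ≤ ∫ s in T..t, gt s := by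
      apply intervalIntegral.integral_mono_on ht
        (intervalIntegrable_const) (hgtcont.intervalIntegrable T t)
      intro s hs
      exact hrate s hs.1
    rwa [intervalIntegral.integral_const, smul_eq_mul] at this
  -- each coordinate is at most 1 on the simplex
  have hle1 : ∀ t ≥ (0:ℝ), x t h ≤ 1 := by
    intro t ht
    have hmem := hsimplex t ht
    calc x t h ≤ ∑ i, x t i :=
          Finset.single_le_sum (fun i _ => hmem.1 i) (Finset.mem_univ h)
      _ = 1 := hmem.2
  -- now derive the contradiction
  have hxT := hxpos T hT0
  set t₁ : ℝ := T + (2/ε) * (Real.log (1 / x T h) + 1) with ht₁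
  have hlognn : 0 ≤ Real.log (1 / x T h) := by
    apply Real.log_nonneg
    rw [le_div_iff₀ hxT]
    simpa using hle1 T hT0
  have ht₁T : T ≤ t₁ := by
    have h0 : 0 ≤ (2/ε) * (Real.log (1 / x T h) + 1) := by positivity
    rw [ht₁]
    exact le_add_of_nonneg_right h0
  have hval : (t₁ - T) * (ε/2) = Real.log (1 / x T h) + 1 := by
    field_simp [ht₁]
    rw [ht₁, one_div]
    field_simp
    ring
  have hbig : 1 < x t₁ h := by
    rw [hgrow t₁ ht₁T]
    have h1 : Real.exp ((t₁ - T) * (ε/2)) ≤ Real.exp (∫ s in T..t₁, gt s) :=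
      Real.exp_le_exp.2 (hintbound t₁ ht₁T)
    have h2 : Real.exp ((t₁ - T) * (ε/2)) = (1 / x T h) * Real.exp 1 := by
      rw [hval, Real.exp_add, Real.exp_log (by positivity)]
    have h3 : (1:ℝ) < x T h * ((1 / x T h) * Real.exp 1) := by
      rw [← mul_assoc, mul_one_div, div_self (ne_of_gt hxT), one_mul]
      linarith [Real.add_one_le_exp (1:ℝ)]
    calc (1:ℝ) < x T h * ((1 / x T h) * Real.exp 1) := h3
      _ = x T h * Real.exp ((t₁ - T) * (ε/2)) := by rw [h2]
      _ ≤ x T h * Real.exp (∫ s in T..t₁, gt s) :=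
          mul_le_mul_of_nonneg_left h1 (le_of_lt hxT)
  exact absurd (hle1 t₁ (le_trans hT0 ht₁T)) (not_le.2 hbig)
end

section
/- Let A be a real n×n payoff matrix of a symmetric two-player game and Δ the standard simplex in ℝⁿ. Suppose x* ∈ Δ is a strict Nash equilibrium, i.e. yᵀ A x* < x*ᵀ A x* for every y ∈ Δ with y ≠ x*. Then x* is asymptotically stable for the replicator dynamics ẋ_h = x_h((Ax)_h − xᵀAx) restricted to Δ: (i) for every neighborhood U of x* in Δ there is a neighborhood V of x* in Δ such that every trajectory of the replicator dynamics in Δ starting in V remains in U for all t ≥ 0, and (ii) there is a neighborhood W of x* in Δ such that every trajectory of the replicator dynamics in Δ starting in W converges to x* as t → ∞. -/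
open Matrix Filter Set

/-- Invariance lemma: if `g' ≤ 0` whenever `g ≤ ε` (for nonneg times), and
`g 0 ≤ ε' < ε`, then `g` stays `≤ ε'`. -/
lemma replicator_stay_le {g g' : ℝ → ℝ} (hg : ∀ t ≥ (0:ℝ), HasDerivAt g (g' t) t)
    {ε ε' : ℝ} (hlt : ε' < ε)
    (hd : ∀ t ≥ (0:ℝ), g t ≤ ε → g' t ≤ 0)
    (h0 : g 0 ≤ ε') : ∀ t ≥ (0:ℝ), g t ≤ ε' := by
  intro t ht
  by_contra hgt
  push_neg at hgt
  set c := min ε (g t) with hc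
  have hε'c : ε' < c := lt_min hlt hgt
  have hcε : c ≤ ε := min_le_left _ _
  have hcont : ∀ s, 0 ≤ s → ContinuousAt g s := fun s hs => (hg s hs).continuousAt
  have hgcont : ContinuousOn g (Icc 0 t) := fun s hs => (hcont s hs.1).continuousWithinAt
  set B : Set ℝ := Icc 0 t ∩ g ⁻¹' (Ici c) with hB
  have hBne : B.Nonempty := ⟨t, ⟨ht, le_refl t⟩, show c ≤ g t from min_le_right _ _⟩
  have hBclosed : IsClosed B := hgcont.preimage_isClosed_of_isClosed isClosed_Icc isClosed_Ici
  have hBbdd : BddBelow B := (bddBelow_Icc : BddBelow (Icc (0:ℝ) t)).mono (inter_subset_left)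
  set T := sInf B with hT
  have hTB : T ∈ B := hBclosed.csInf_mem hBne hBbdd
  have hT0 : 0 ≤ T := hTB.1.1
  have hTt : T ≤ t := hTB.1.2
  have hgT : c ≤ g T := hTB.2
  have hTpos : 0 < T := by
    rcases hT0.lt_or_eq with h | h
    · exact h
    · exfalso; rw [← h] at hgT; linarith
  have hlt' : ∀ s, 0 ≤ s → s < T → g s < c := by
    intro s hs hsT
    by_contra hge
    push_neg at hge
    have : s ∈ B := ⟨⟨hs, hsT.le.trans hTt⟩, hge⟩
    exact absurd (csInf_le hBbdd this) (not_le.2 hsT)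
  have hgTle : g T ≤ c := by
    have htd : Tendsto g (nhdsWithin T (Iio T)) (nhds (g T)) :=
      ((hcont T hT0).tendsto).mono_left nhdsWithin_le_nhds
    refine le_of_tendsto htd ?_
    filter_upwards [Ioo_mem_nhdsLT hTpos] with s hs
    exact (hlt' s hs.1.le hs.2).le
  have hgle : ∀ s ∈ Icc (0:ℝ) T, g s ≤ ε := by
    intro s hs
    rcases lt_or_eq_of_le hs.2 with h | h
    · exact ((hlt' s hs.1 h).le).trans hcε
    · rw [h]; exact hgTle.trans hcε
  have hanti : AntitoneOn g (Icc 0 T) := by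
    refine antitoneOn_of_deriv_nonpos (convex_Icc 0 T)
      (fun s hs => (hcont s hs.1).continuousWithinAt) ?_ ?_
    · intro s hs
      rw [interior_Icc] at hs
      exact ((hg s hs.1.le).differentiableAt).differentiableWithinAt
    · intro s hs
      rw [interior_Icc] at hs
      rw [(hg s hs.1.le).deriv]
      exact hd s hs.1.le (hgle s ⟨hs.1.le, hs.2.le⟩)
  have : g T ≤ g 0 := hanti ⟨le_refl 0, hT0⟩ ⟨hT0, le_refl T⟩ hT0
  linarith

/-- Exponential decay via the Lyapunov-type inequality `g' ≤ -k g`. -/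
lemma replicator_decay_le {g g' : ℝ → ℝ} (hg : ∀ t ≥ (0:ℝ), HasDerivAt g (g' t) t)
    {k : ℝ} (hd : ∀ t ≥ (0:ℝ), g' t ≤ -k * g t) :
    ∀ t ≥ (0:ℝ), g t ≤ g 0 * Real.exp (-k * t) := by
  have key : AntitoneOn (fun t => g t * Real.exp (k * t)) (Ici 0) := by
    have hder : ∀ s, 0 ≤ s → HasDerivAt (fun t => g t * Real.exp (k * t))
        (g' s * Real.exp (k * s) + g s * (Real.exp (k * s) * k)) s := by
      intro s hs
      have he : HasDerivAt (fun t : ℝ => Real.exp (k * t)) (Real.exp (k * s) * k) s := by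
        have h1 : HasDerivAt (fun t : ℝ => k * t) k s := by
          simpa using (hasDerivAt_id s).const_mul k
        exact (Real.hasDerivAt_exp (k * s)).comp s h1
      exact (hg s hs).mul he
    refine antitoneOn_of_deriv_nonpos (convex_Ici 0)
      (fun s hs => (hder s hs).continuousAt.continuousWithinAt) ?_ ?_
    · intro s hs
      rw [interior_Ici] at hs
      exact ((hder s hs.le).differentiableAt).differentiableWithinAt
    · intro s hs
      rw [interior_Ici] at hs
      rw [(hder s hs.le).deriv]
      have hE := Real.exp_pos (k * s)
      have := hd s hs.le
      nlinarith
  intro t ht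
  have h1 : g t * Real.exp (k * t) ≤ g 0 * Real.exp (k * 0) :=
    key (self_mem_Ici) ht ht
  have hinv : Real.exp (-k * t) * Real.exp (k * t) = 1 := by
    rw [← Real.exp_add]; ring_nf; exact Real.exp_zero
  simp only [mul_zero, Real.exp_zero, mul_one] at h1
  have h2 : g t * Real.exp (k * t) * Real.exp (-k * t) ≤ g 0 * Real.exp (-k * t) :=
    mul_le_mul_of_nonneg_right h1 (Real.exp_pos _).le
  calc g t = g t * (Real.exp (-k * t) * Real.exp (k * t)) := by rw [hinv, mul_one]
    _ = g t * Real.exp (k * t) * Real.exp (-k * t) := by ring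
    _ ≤ g 0 * Real.exp (-k * t) := h2

/-- A strict Nash equilibrium is asymptotically stable for the replicator
dynamics restricted to the simplex: (i) trajectories starting close enough
stay close (Lyapunov stability within the simplex), and (ii) trajectories
starting in some neighborhood of `x*` in the simplex converge to `x*`. -/
theorem strict_nash_asymptotically_stable
    {n : ℕ} (A : Matrix (Fin n) (Fin n) ℝ)
    (xstar : Fin n → ℝ) (hx : xstar ∈ stdSimplex ℝ (Fin n))
    (hstrict : ∀ y ∈ stdSimplex ℝ (Fin n), y ≠ xstar →
      y ⬝ᵥ A.mulVec xstar < xstar ⬝ᵥ A.mulVec xstar) :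
    (∀ U ∈ nhdsWithin xstar (stdSimplex ℝ (Fin n)),
      ∃ V ∈ nhdsWithin xstar (stdSimplex ℝ (Fin n)),
        ∀ x : ℝ → Fin n → ℝ,
          (∀ t ≥ (0 : ℝ), ∀ h : Fin n,
            HasDerivAt (fun s => x s h)
              (x t h * ((A.mulVec (x t)) h - (x t) ⬝ᵥ A.mulVec (x t))) t) →
          (∀ t ≥ (0 : ℝ), x t ∈ stdSimplex ℝ (Fin n)) →
          x 0 ∈ V → ∀ t ≥ (0 : ℝ), x t ∈ U) ∧
    (∃ W ∈ nhdsWithin xstar (stdSimplex ℝ (Fin n)),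
      ∀ x : ℝ → Fin n → ℝ,
        (∀ t ≥ (0 : ℝ), ∀ h : Fin n,
          HasDerivAt (fun s => x s h)
            (x t h * ((A.mulVec (x t)) h - (x t) ⬝ᵥ A.mulVec (x t))) t) →
        (∀ t ≥ (0 : ℝ), x t ∈ stdSimplex ℝ (Fin n)) →
        x 0 ∈ W → Filter.Tendsto x Filter.atTop (nhds xstar)) := by
  classical
  have hnn := hx.1
  have hsum : ∑ j, xstar j = 1 := hx.2
  -- Step 1: `xstar` is a vertex `e_i` and `A h i < A i i` for `h ≠ i`.
  obtain ⟨i, hxi, hpure, hAlt⟩ :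
      ∃ i, xstar i = 1 ∧ (∀ j, j ≠ i → xstar j = 0) ∧ (∀ h, h ≠ i → A h i < A i i) := by
    obtain ⟨i, hi⟩ : ∃ i, 0 < xstar i := by
      by_contra h
      push_neg at h
      have : ∑ j, xstar j = 0 :=
        Finset.sum_eq_zero fun j _ => le_antisymm (h j) (hnn j)
      rw [this] at hsum; norm_num at hsum
    have hpure : ∀ j, j ≠ i → xstar j = 0 := by
      by_contra hcon
      push_neg at hcon
      obtain ⟨j, hji, hj⟩ := hcon
      have hj' : 0 < xstar j := (hnn j).lt_of_ne (Ne.symm hj)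
      have hneq : ∀ h : Fin n, (Pi.single h 1 : Fin n → ℝ) ≠ xstar := by
        intro h heq
        rcases ne_or_eq h i with hhi | rfl
        · have : xstar i = 0 := by
            rw [← heq]; simp [Pi.single_apply, Ne.symm hhi]
          linarith
        · have : xstar j = 0 := by
            rw [← heq]; simp [Pi.single_apply, hji]
          linarith
      have hlt : ∀ h : Fin n, (A.mulVec xstar) h < xstar ⬝ᵥ A.mulVec xstar := by
        intro h
        have := hstrict _ (single_mem_stdSimplex ℝ h) (hneq h)
        rwa [single_dotProduct, one_mul] at this
      have hcc : xstar ⬝ᵥ A.mulVec xstar < xstar ⬝ᵥ A.mulVec xstar := by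
        conv_lhs => rw [dotProduct]
        calc ∑ h, xstar h * (A.mulVec xstar) h
            < ∑ h, xstar h * (xstar ⬝ᵥ A.mulVec xstar) := by
              refine Finset.sum_lt_sum (fun h _ => ?_) ⟨i, Finset.mem_univ i, ?_⟩
              · exact mul_le_mul_of_nonneg_left (hlt h).le (hnn h)
              · exact (mul_lt_mul_iff_right₀ hi).2 (hlt i)
          _ = xstar ⬝ᵥ A.mulVec xstar := by
              rw [← Finset.sum_mul, hsum, one_mul]
      exact lt_irrefl _ hcc
    have hxi : xstar i = 1 := by
      have := Finset.sum_eq_single (M := ℝ) i (fun j _ hj => hpure j hj)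
        (fun hni => absurd (Finset.mem_univ i) hni)
      rw [this] at hsum; exact hsum
    refine ⟨i, hxi, hpure, ?_⟩
    have hveq : ∀ h, (A.mulVec xstar) h = A h i := by
      intro h
      rw [Matrix.mulVec, dotProduct]
      rw [Finset.sum_eq_single i (fun j _ hj => by rw [hpure j hj, mul_zero])
        (fun hni => absurd (Finset.mem_univ i) hni), hxi, mul_one]
    have hceq : xstar ⬝ᵥ A.mulVec xstar = A i i := by
      rw [dotProduct]
      rw [Finset.sum_eq_single i (fun j _ hj => by rw [hpure j hj, zero_mul])
        (fun hni => absurd (Finset.mem_univ i) hni), hxi, one_mul, hveq]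
    intro h hh
    have hne : (Pi.single h 1 : Fin n → ℝ) ≠ xstar := by
      intro heq
      have h10 : (1:ℝ) = 0 := by
        have := congrFun heq h
        rw [hpure h hh] at this
        simpa using this
      norm_num at h10
    have := hstrict _ (single_mem_stdSimplex ℝ h) hne
    rwa [single_dotProduct, one_mul, hveq, hceq] at this
  -- Step 2: uniform constants δ, M, ε
  obtain ⟨δ, hδ0, hδ⟩ : ∃ δ > 0, ∀ h, h ≠ i → A h i + δ ≤ A i i := by
    by_cases hne : (Finset.univ.erase i).Nonempty
    · obtain ⟨h₀, hh₀, hmin⟩ :=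
        Finset.exists_min_image (Finset.univ.erase i) (fun h => A i i - A h i) hne
      refine ⟨A i i - A h₀ i,
        by linarith [hAlt h₀ (Finset.ne_of_mem_erase hh₀)], fun h hh => ?_⟩
      have := hmin h (Finset.mem_erase.2 ⟨hh, Finset.mem_univ h⟩)
      linarith
    · exact ⟨1, one_pos, fun h hh =>
        absurd ⟨h, Finset.mem_erase.2 ⟨hh, Finset.mem_univ h⟩⟩ hne⟩
  obtain ⟨M, hM0, hM⟩ : ∃ M ≥ 0, ∀ h j, |A i j - A h j| ≤ M := by
    refine ⟨(Finset.univ ×ˢ Finset.univ).sup' ⟨(i,i), by simp⟩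
      (fun p => |A i p.2 - A p.1 p.2|), ?_, fun h j => ?_⟩
    · exact le_trans (abs_nonneg (A i i - A i i))
        (Finset.le_sup' (fun p : Fin n × Fin n => |A i p.2 - A p.1 p.2|)
          (by simp : ((i : Fin n), (i : Fin n)) ∈ Finset.univ ×ˢ Finset.univ))
    · exact Finset.le_sup' (fun p : Fin n × Fin n => |A i p.2 - A p.1 p.2|)
        (by simp : (h, j) ∈ Finset.univ ×ˢ Finset.univ)
  set ε : ℝ := min (1/2) (δ / (2 * (δ + M + 1))) with hεdef
  have hden : (0:ℝ) < 2 * (δ + M + 1) := by nlinarith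
  have hε0 : 0 < ε := lt_min (by norm_num) (div_pos hδ0 hden)
  have hεhalf : ε ≤ 1/2 := min_le_left _ _
  have hεk : ε * (δ + M) ≤ δ / 2 := by
    have h1 : ε ≤ δ / (2 * (δ + M + 1)) := min_le_right _ _
    have h2 : ε * (δ + M) ≤ δ / (2 * (δ + M + 1)) * (δ + M) :=
      mul_le_mul_of_nonneg_right h1 (by linarith)
    have h3 : δ / (2 * (δ + M + 1)) * (δ + M) ≤ δ / 2 := by
      rw [div_mul_eq_mul_div, div_le_div_iff₀ hden (by norm_num)]
      nlinarith
    linarith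
  -- Step 3: payoff gap near the vertex
  have gap : ∀ x ∈ stdSimplex ℝ (Fin n), 1 - x i ≤ ε → ∀ h, h ≠ i →
      (A.mulVec x) h + δ / 2 ≤ (A.mulVec x) i := by
    intro x hxm hxe h hh
    have hnn' := hxm.1
    have hs : ∑ j, x j = 1 := hxm.2
    have e1 : (A.mulVec x) i - (A.mulVec x) h = ∑ j, (A i j - A h j) * x j := by
      rw [Matrix.mulVec, Matrix.mulVec, dotProduct, dotProduct, ← Finset.sum_sub_distrib]
      exact Finset.sum_congr rfl fun j _ => by ring
    have e2 : ∑ j, (A i j - A h j) * x j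
        = (A i i - A h i) * x i + ∑ j ∈ Finset.univ.erase i, (A i j - A h j) * x j := by
      rw [← Finset.add_sum_erase _ _ (Finset.mem_univ i)]
    have e3 : ∑ j ∈ Finset.univ.erase i, x j = 1 - x i := by
      rw [Finset.sum_erase_eq_sub (Finset.mem_univ i), hs]
    have e4 : ∀ j ∈ Finset.univ.erase i, -(M * x j) ≤ (A i j - A h j) * x j := by
      intro j _
      have h1 := (abs_le.1 (hM h j)).1
      have h2 := hnn' j
      nlinarith
    have e5 : -(M * (1 - x i)) ≤ ∑ j ∈ Finset.univ.erase i, (A i j - A h j) * x j := by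
      calc -(M * (1 - x i)) = ∑ j ∈ Finset.univ.erase i, -(M * x j) := by
            rw [Finset.sum_neg_distrib, ← Finset.mul_sum, e3]
        _ ≤ _ := Finset.sum_le_sum e4
    have hxile : x i ≤ 1 := by
      have := Finset.single_le_sum (f := x) (fun j _ => hnn' j) (Finset.mem_univ i)
      linarith [this, hs.ge]
    have hδh := hδ h hh
    have hxi0 := hnn' i
    have k1 : δ * x i ≤ (A i i - A h i) * x i :=
      mul_le_mul_of_nonneg_right (by linarith) hxi0
    have k2 : δ * (1 - ε) ≤ δ * x i :=
      mul_le_mul_of_nonneg_left (by linarith) hδ0.le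
    have k3 : M * (1 - x i) ≤ M * ε := mul_le_mul_of_nonneg_left hxe hM0
    nlinarith [e1, e2, e5]
  -- Step 4: drift inequality
  have drift : ∀ x ∈ stdSimplex ℝ (Fin n), 1 - x i ≤ ε →
      δ / 4 * (1 - x i) ≤ x i * ((A.mulVec x) i - x ⬝ᵥ A.mulVec x) := by
    intro x hxm hxe
    have hnn' := hxm.1
    have hs : ∑ j, x j = 1 := hxm.2
    have e1 : (A.mulVec x) i - x ⬝ᵥ A.mulVec x
        = ∑ h, x h * ((A.mulVec x) i - (A.mulVec x) h) := by
      rw [dotProduct]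
      have : ∑ h, x h * ((A.mulVec x) i - (A.mulVec x) h)
          = (∑ h, x h) * (A.mulVec x) i - ∑ h, x h * (A.mulVec x) h := by
        rw [Finset.sum_mul, ← Finset.sum_sub_distrib]
        exact Finset.sum_congr rfl fun j _ => by ring
      rw [this, hs, one_mul]
    have e2 : ∑ h, x h * ((A.mulVec x) i - (A.mulVec x) h)
        = ∑ h ∈ Finset.univ.erase i, x h * ((A.mulVec x) i - (A.mulVec x) h) := by
      rw [← Finset.add_sum_erase _ _ (Finset.mem_univ i), sub_self, mul_zero, zero_add]
    have e3 : ∑ h ∈ Finset.univ.erase i, x h = 1 - x i := by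
      rw [Finset.sum_erase_eq_sub (Finset.mem_univ i), hs]
    have e4 : (δ / 2) * (1 - x i)
        ≤ ∑ h ∈ Finset.univ.erase i, x h * ((A.mulVec x) i - (A.mulVec x) h) := by
      calc (δ / 2) * (1 - x i) = ∑ h ∈ Finset.univ.erase i, x h * (δ / 2) := by
            rw [← Finset.sum_mul, e3]; ring
        _ ≤ _ := by
            refine Finset.sum_le_sum fun h hh => ?_
            have := gap x hxm hxe h (Finset.ne_of_mem_erase hh)
            exact mul_le_mul_of_nonneg_left (by linarith) (hnn' h)
    have hxihalf : 1/2 ≤ x i := by linarith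
    have hgi0 : 0 ≤ 1 - x i := by
      have := Finset.single_le_sum (f := x) (fun j _ => hnn' j) (Finset.mem_univ i)
      linarith [this, hs.ge]
    have key : (δ / 2) * (1 - x i) ≤ (A.mulVec x) i - x ⬝ᵥ A.mulVec x := by
      rw [e1, e2]; exact e4
    nlinarith [mul_le_mul_of_nonneg_right hxihalf
      (mul_nonneg (by linarith : (0:ℝ) ≤ δ/2) hgi0)]
  -- Step 5: trajectory analysis
  have traj : ∀ x : ℝ → Fin n → ℝ,
      (∀ t ≥ (0 : ℝ), ∀ h : Fin n,
        HasDerivAt (fun s => x s h)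
          (x t h * ((A.mulVec (x t)) h - (x t) ⬝ᵥ A.mulVec (x t))) t) →
      (∀ t ≥ (0 : ℝ), x t ∈ stdSimplex ℝ (Fin n)) →
      1 - x 0 i < ε →
      (∀ t ≥ (0 : ℝ), 1 - x t i ≤ 1 - x 0 i) ∧
        Filter.Tendsto x Filter.atTop (nhds xstar) := by
    intro x hderiv hmem h0
    set g : ℝ → ℝ := fun t => 1 - x t i with hgdef
    set g' : ℝ → ℝ :=
      fun t => -(x t i * ((A.mulVec (x t)) i - (x t) ⬝ᵥ A.mulVec (x t))) with hg'def
    have hgderiv : ∀ t ≥ (0:ℝ), HasDerivAt g (g' t) t :=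
      fun t ht => (hderiv t ht i).const_sub 1
    have hg0 : ∀ t ≥ (0:ℝ), 0 ≤ g t := by
      intro t ht
      have hnn' := (hmem t ht).1
      have := Finset.single_le_sum (f := x t) (fun j _ => hnn' j) (Finset.mem_univ i)
      have hs := (hmem t ht).2
      simp only [hgdef]
      linarith [this, hs.ge]
    have hbound : ∀ t ≥ (0:ℝ), g t ≤ ε → g' t ≤ -(δ/4) * g t := by
      intro t ht hgt
      have := drift (x t) (hmem t ht) hgt
      simp only [hg'def, hgdef] at this ⊢
      linarith
    have hstay : ∀ t ≥ (0:ℝ), g t ≤ g 0 := by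
      refine replicator_stay_le hgderiv h0 (fun s hs hsε => ?_) (le_refl _)
      have hb := hbound s hs hsε
      have hgs := hg0 s hs
      have hprod : (0:ℝ) ≤ δ / 4 * g s := mul_nonneg (by linarith) hgs
      simp only [hgdef, hg'def] at hb hgs hprod ⊢
      linarith
    have hfull : ∀ t ≥ (0:ℝ), g' t ≤ -(δ/4) * g t := by
      intro t ht
      exact hbound t ht ((hstay t ht).trans h0.le)
    have hdecay := replicator_decay_le hgderiv hfull
    have hgto : Tendsto g atTop (nhds 0) := by
      have hexp : Tendsto (fun t : ℝ => g 0 * Real.exp (-(δ/4) * t)) atTop (nhds 0) := by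
        have h1 : Tendsto (fun t : ℝ => (δ/4) * t) atTop atTop :=
          Tendsto.const_mul_atTop (by linarith) tendsto_id
        have h2 : Tendsto (fun t : ℝ => Real.exp ((δ/4) * t)) atTop atTop :=
          Real.tendsto_exp_atTop.comp h1
        have h3 : Tendsto (fun t : ℝ => (Real.exp ((δ/4) * t))⁻¹) atTop (nhds 0) :=
          h2.inv_tendsto_atTop
        have h4 : (fun t : ℝ => g 0 * Real.exp (-(δ/4) * t))
            = fun t : ℝ => g 0 * (Real.exp ((δ/4) * t))⁻¹ := by
          funext t
          rw [← Real.exp_neg]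
          ring_nf
        rw [h4]
        simpa using h3.const_mul (g 0)
      refine squeeze_zero' ?_ ?_ hexp
      · filter_upwards [eventually_ge_atTop (0:ℝ)] with t ht
        exact hg0 t ht
      · filter_upwards [eventually_ge_atTop (0:ℝ)] with t ht
        exact hdecay t ht
    have hcoordbd : ∀ t ≥ (0:ℝ), ∀ j, j ≠ i → x t j ≤ g t := by
      intro t ht j hj
      have hnn' := (hmem t ht).1
      have h1 : x t j ≤ ∑ h ∈ Finset.univ.erase i, x t h :=
        Finset.single_le_sum (f := x t) (fun h _ => hnn' h)
          (Finset.mem_erase.2 ⟨hj, Finset.mem_univ j⟩)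
      have h2 : ∑ h ∈ Finset.univ.erase i, x t h = 1 - x t i := by
        rw [Finset.sum_erase_eq_sub (Finset.mem_univ i), (hmem t ht).2]
      simp only [hgdef]
      linarith
    have hconv : Tendsto x atTop (nhds xstar) := by
      rw [tendsto_pi_nhds]
      intro j
      rcases eq_or_ne j i with rfl | hj
      · have h1 : Tendsto (fun t => 1 - g t) atTop (nhds (1 - 0)) :=
          tendsto_const_nhds.sub hgto
        have h2 : (fun t => 1 - g t) = fun t => x t j := by
          funext t; simp only [hgdef]; ring
        rw [h2] at h1
        rw [hxi]
        simpa using h1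
      · have h1 : Tendsto (fun t => x t j) atTop (nhds 0) := by
          refine squeeze_zero' ?_ ?_ hgto
          · filter_upwards [eventually_ge_atTop (0:ℝ)] with t ht
            exact (hmem t ht).1 j
          · filter_upwards [eventually_ge_atTop (0:ℝ)] with t ht
            exact hcoordbd t ht j hj
        rw [hpure j hj]
        exact h1
    exact ⟨fun t ht => hstay t ht, hconv⟩
  -- distance bound within the simplex
  have hdist : ∀ y ∈ stdSimplex ℝ (Fin n), dist y xstar ≤ 1 - y i := by
    intro y hy
    have hnn' := hy.1
    have hs : ∑ j, y j = 1 := hy.2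
    have hyile : y i ≤ 1 := by
      have := Finset.single_le_sum (f := y) (fun j _ => hnn' j) (Finset.mem_univ i)
      linarith [this, hs.ge]
    refine (dist_pi_le_iff (by linarith)).2 fun j => ?_
    rcases eq_or_ne j i with rfl | hj
    · rw [Real.dist_eq, hxi, abs_sub_comm, abs_of_nonneg (by linarith)]
    · rw [Real.dist_eq, hpure j hj, sub_zero, abs_of_nonneg (hnn' j)]
      have h1 : y j ≤ ∑ h ∈ Finset.univ.erase i, y h :=
        Finset.single_le_sum (f := y) (fun h _ => hnn' h)
          (Finset.mem_erase.2 ⟨hj, Finset.mem_univ j⟩)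
      have h2 : ∑ h ∈ Finset.univ.erase i, y h = 1 - y i := by
        rw [Finset.sum_erase_eq_sub (Finset.mem_univ i), hs]
      linarith
  -- neighborhoods of the form {y | 1 - ρ < y i} ∩ Δ
  have hnbhd : ∀ ρ > (0:ℝ),
      ({y : Fin n → ℝ | 1 - ρ < y i} ∩ stdSimplex ℝ (Fin n))
        ∈ nhdsWithin xstar (stdSimplex ℝ (Fin n)) := by
    intro ρ hρ
    refine mem_nhdsWithin.2 ⟨{y : Fin n → ℝ | 1 - ρ < y i}, ?_, ?_, fun y hy => ⟨hy.1, hy.2⟩⟩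
    · exact isOpen_lt continuous_const (continuous_apply i)
    · simp only [mem_setOf_eq, hxi]; linarith
  constructor
  · -- Lyapunov stability
    intro U hU
    obtain ⟨r, hr0, hrsub⟩ := Metric.mem_nhdsWithin_iff.1 hU
    set ρ : ℝ := min (ε/2) (r/2) with hρdef
    have hρ0 : 0 < ρ := lt_min (by linarith) (by linarith)
    refine ⟨{y : Fin n → ℝ | 1 - ρ < y i} ∩ stdSimplex ℝ (Fin n), hnbhd ρ hρ0,
      fun x hderiv hmem hx0 t ht => ?_⟩
    have h0 : 1 - x 0 i < ε := by
      have := hx0.1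
      simp only [mem_setOf_eq] at this
      have : 1 - x 0 i < ρ := by linarith
      linarith [min_le_left (ε/2) (r/2), hε0]
    have hst := (traj x hderiv hmem h0).1 t ht
    have h0ρ : 1 - x 0 i < ρ := by
      have := hx0.1; simp only [mem_setOf_eq] at this; linarith
    have hd := hdist (x t) (hmem t ht)
    refine hrsub ⟨?_, hmem t ht⟩
    rw [Metric.mem_ball]
    have : ρ ≤ r/2 := min_le_right _ _
    calc dist (x t) xstar ≤ 1 - x t i := hd
      _ ≤ 1 - x 0 i := hst
      _ < ρ := h0ρ
      _ ≤ r/2 := this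
      _ < r := by linarith
  · -- attraction
    refine ⟨{y : Fin n → ℝ | 1 - ε/2 < y i} ∩ stdSimplex ℝ (Fin n),
      hnbhd (ε/2) (by linarith), fun x hderiv hmem hx0 => ?_⟩
    have h0 : 1 - x 0 i < ε := by
      have := hx0.1; simp only [mem_setOf_eq] at this; linarith
    exact (traj x hderiv hmem h0).2
end
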